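/- Let C ∈ ℝ^{n×n} be symmetric, β ∈ [0,1), and V ∈ ℝ^{k×n} feasible with a well-defined pass of Mixing Method++ producing V̂, with associated vectors y = (y_1,…,y_n) and w = (w_1,…,w_n). Let L be the strictly lower-triangular part of C (L_{ij} = c_{ij} for i > j, else 0), and let D_y, D_w be the diagonal matrices with diagonals y, w. Then ((1+β)L + D_w D_y) V̂ᵀ = −((1+β)Lᵀ + β D_y) Vᵀ. -/

import Mathlib

open Matrix Finset
open scoped BigOperators RealInnerProductSpace

/-- Matrix representation of one pass of Mixing Method++:
`((1+β)L + D_w D_y) V̂ᵀ = -((1+β)Lᵀ + β D_y) Vᵀ`, where `L` is the strictly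
lower-triangular part of `C`. Here `Vᵀ` and `V̂ᵀ` are the `n × k` matrices whose
`i`-th rows are the columns `v_i`, `v̂_i`. -/
theorem mixing_pp_matrix_representation {n k : ℕ}
    (C : Matrix (Fin n) (Fin n) ℝ) (hC : C.IsSymm)
    (β : ℝ) (hβ0 : 0 ≤ β) (hβ1 : β < 1)
    (V Vh g u : Fin n → EuclideanSpace ℝ (Fin k)) (y w : Fin n → ℝ)
    (hV : ∀ i, ‖V i‖ = 1)
    (hg : ∀ i, g i = (∑ j ∈ Finset.univ.filter (fun j => j < i), C i j • Vh j) +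
                     ∑ j ∈ Finset.univ.filter (fun j => i < j), C i j • V j)
    (hy : ∀ i, y i = ‖g i‖) (hypos : ∀ i, 0 < y i)
    (hu : ∀ i, u i = -((y i)⁻¹ • g i))
    (hw : ∀ i, w i = ‖(1 + β) • u i - β • V i‖)
    (hVh : ∀ i, Vh i = (w i)⁻¹ • ((1 + β) • u i - β • V i))
    (L : Matrix (Fin n) (Fin n) ℝ)
    (hL : ∀ i j, L i j = if j < i then C i j else 0) :
    ((1 + β) • L + Matrix.diagonal w * Matrix.diagonal y) *
        (Matrix.of fun (i : Fin n) (p : Fin k) => Vh i p) =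
      -(((1 + β) • Lᵀ + β • Matrix.diagonal y) *
        (Matrix.of fun (i : Fin n) (p : Fin k) => V i p)) := by
  have hu1 : ∀ i, ‖u i‖ = 1 := by
    intro i
    rw [hu, norm_neg, norm_smul, hy, Real.norm_eq_abs, abs_inv,
      abs_of_pos (hy i ▸ hypos i)]
    exact inv_mul_cancel₀ (by rw [← hy]; exact (hypos i).ne')
  have hw0 : ∀ i, w i ≠ 0 := by
    intro i
    have h1 : (1:ℝ) ≤ w i := by
      rw [hw]
      calc (1:ℝ) = ‖(1 + β) • u i‖ - ‖β • V i‖ := by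
            rw [norm_smul, norm_smul, hu1, hV, Real.norm_eq_abs, Real.norm_eq_abs,
              abs_of_nonneg hβ0, abs_of_nonneg (by linarith : (0:ℝ) ≤ 1 + β)]
            ring
        _ ≤ ‖(1 + β) • u i - β • V i‖ := norm_sub_norm_le _ _
    positivity
  have hyu : ∀ i p, y i * u i p = -(g i p) := by
    intro i p
    have := congrArg (fun v : EuclideanSpace ℝ (Fin k) => v p) (hu i)
    simp only [PiLp.neg_apply, PiLp.smul_apply, smul_eq_mul] at this
    rw [this]
    field_simp
    rw [mul_div_cancel_left₀ _ (hypos i).ne']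
  have hwVh : ∀ i p, w i * Vh i p = (1 + β) * u i p - β * V i p := by
    intro i p
    have := congrArg (fun v : EuclideanSpace ℝ (Fin k) => v p) (hVh i)
    simp only [PiLp.smul_apply, PiLp.sub_apply, smul_eq_mul] at this
    rw [this]
    field_simp
    exact mul_div_cancel_left₀ _ (hw0 i)
  have hgp : ∀ i p, g i p = (∑ j ∈ Finset.univ.filter (fun j => j < i), C i j * Vh j p) +
      ∑ j ∈ Finset.univ.filter (fun j => i < j), C i j * V j p := by
    intro i p
    have hsum : ∀ (s : Finset (Fin n)) (f : Fin n → EuclideanSpace ℝ (Fin k)),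
        (∑ j ∈ s, f j) p = ∑ j ∈ s, f j p := fun s f => by rw [WithLp.ofLp_sum, Finset.sum_apply]
    have := congrArg (fun v : EuclideanSpace ℝ (Fin k) => v p) (hg i)
    simpa [hsum, PiLp.add_apply, PiLp.smul_apply, smul_eq_mul] using this
  rw [Matrix.diagonal_mul_diagonal]
  ext i p
  set c : ℝ := 1 + β with hc
  simp only [Matrix.mul_apply, Matrix.add_apply, Matrix.smul_apply, Matrix.neg_apply,
    Matrix.of_apply, Matrix.diagonal_apply, Matrix.transpose_apply, smul_eq_mul,
    add_mul, Finset.sum_add_distrib]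
  have hdiag1 : ∑ j, (if i = j then w i * y i else 0) * Vh j p = w i * y i * Vh i p := by
    rw [Finset.sum_eq_single i] <;> simp; tauto
  have hdiag2 : ∑ j, β * (if i = j then y i else 0) * V j p = β * y i * V i p := by
    rw [Finset.sum_eq_single i] <;> simp; tauto
  rw [hdiag1, hdiag2]
  have hL1 : ∑ j, c * L i j * Vh j p
      = c * ∑ j ∈ Finset.univ.filter (fun j => j < i), C i j * Vh j p := by
    rw [Finset.mul_sum, Finset.sum_filter]
    refine Finset.sum_congr rfl fun j _ => ?_
    rw [hL]
    split <;> ring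
  have hL2 : ∑ j, c * L j i * V j p
      = c * ∑ j ∈ Finset.univ.filter (fun j => i < j), C i j * V j p := by
    rw [Finset.mul_sum, Finset.sum_filter]
    refine Finset.sum_congr rfl fun j _ => ?_
    rw [hL, hC.apply i j]
    split <;> ring
  rw [hL1, hL2]
  have key : w i * y i * Vh i p
      = -(1 + β) * g i p - β * y i * V i p := by
    have h1 : y i * (w i * Vh i p) = y i * ((1 + β) * u i p - β * V i p) := by
      rw [hwVh]
    calc w i * y i * Vh i p = y i * (w i * Vh i p) := by ring
      _ = (1 + β) * (y i * u i p) - β * y i * V i p := by rw [h1]; ring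
      _ = -(1 + β) * g i p - β * y i * V i p := by rw [hyu]; ring
  rw [key, hgp, hc]
  ring
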